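/- (Invariance of the Wronskian under a change of dependent variable.) Let I ⊆ ℝ be an open interval, let f, g : I → ℂ be continuous, and let w₁, w₂ : I → ℂ be twice differentiable functions satisfying w_j″ + f w_j′ + g w_j = 0 on I for j = 1, 2. Let t₁, t₂ : I → ℂ be differentiable, and set v_j = t₁ w_j + t₂ w_j′ for j = 1, 2, and h = t₁(t₂′ − f t₂) + t₂(g t₂ − t₁′) + t₁². Then for every x ∈ I, v₁(x)v₂′(x) − v₁′(x)v₂(x) = h(x) · (w₁(x)w₂′(x) − w₁′(x)w₂(x)). Consequently, if F is an antiderivative of f on I, then exp(F(x)) · (v₁v₂′ − v₁′v₂)(x) = h(x) · C for all x ∈ I, where C is the constant value of exp(F) · (w₁w₂′ − w₁′w₂); i.e. the Wronskian constant is unchanged by the transformation v = t₁w + t₂w′. -/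

import Mathlib

open Set

/-- Invariance of the Wronskian constant under the change of dependent variable
`v = t₁ w + t₂ w′`. -/
theorem wronskian_invariance_dependent_variable
    (p q : ℝ) (f g F w₁ w₂ t₁ t₂ : ℝ → ℂ)
    (hf : ContinuousOn f (Ioo p q)) (hg : ContinuousOn g (Ioo p q))
    (hF : ∀ x ∈ Ioo p q, HasDerivAt F (f x) x)
    (hw₁ : ∀ x ∈ Ioo p q, DifferentiableAt ℝ w₁ x)
    (hw₁' : ∀ x ∈ Ioo p q, DifferentiableAt ℝ (deriv w₁) x)
    (hw₂ : ∀ x ∈ Ioo p q, DifferentiableAt ℝ w₂ x)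
    (hw₂' : ∀ x ∈ Ioo p q, DifferentiableAt ℝ (deriv w₂) x)
    (heq₁ : ∀ x ∈ Ioo p q, deriv (deriv w₁) x + f x * deriv w₁ x + g x * w₁ x = 0)
    (heq₂ : ∀ x ∈ Ioo p q, deriv (deriv w₂) x + f x * deriv w₂ x + g x * w₂ x = 0)
    (ht₁ : ∀ x ∈ Ioo p q, DifferentiableAt ℝ t₁ x)
    (ht₂ : ∀ x ∈ Ioo p q, DifferentiableAt ℝ t₂ x)
    (v₁ v₂ h : ℝ → ℂ)
    (hv₁ : ∀ x, v₁ x = t₁ x * w₁ x + t₂ x * deriv w₁ x)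
    (hv₂ : ∀ x, v₂ x = t₁ x * w₂ x + t₂ x * deriv w₂ x)
    (hh : ∀ x, h x = t₁ x * (deriv t₂ x - f x * t₂ x)
      + t₂ x * (g x * t₂ x - deriv t₁ x) + t₁ x ^ 2) :
    (∀ x ∈ Ioo p q,
      v₁ x * deriv v₂ x - deriv v₁ x * v₂ x
        = h x * (w₁ x * deriv w₂ x - deriv w₁ x * w₂ x)) ∧
    ∃ C : ℂ,
      (∀ x ∈ Ioo p q,
        Complex.exp (F x) * (w₁ x * deriv w₂ x - deriv w₁ x * w₂ x) = C) ∧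
      (∀ x ∈ Ioo p q,
        Complex.exp (F x) * (v₁ x * deriv v₂ x - deriv v₁ x * v₂ x) = h x * C) := by
  have hv₁f : v₁ = fun x => t₁ x * w₁ x + t₂ x * deriv w₁ x := funext hv₁
  have hv₂f : v₂ = fun x => t₁ x * w₂ x + t₂ x * deriv w₂ x := funext hv₂
  have hdv₁ : ∀ x ∈ Ioo p q, deriv v₁ x
      = deriv t₁ x * w₁ x + t₁ x * deriv w₁ x
        + (deriv t₂ x * deriv w₁ x + t₂ x * deriv (deriv w₁) x) := by
    intro x hx
    rw [hv₁f]
    exact (((ht₁ x hx).hasDerivAt.mul (hw₁ x hx).hasDerivAt).add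
      ((ht₂ x hx).hasDerivAt.mul (hw₁' x hx).hasDerivAt)).deriv
  have hdv₂ : ∀ x ∈ Ioo p q, deriv v₂ x
      = deriv t₁ x * w₂ x + t₁ x * deriv w₂ x
        + (deriv t₂ x * deriv w₂ x + t₂ x * deriv (deriv w₂) x) := by
    intro x hx
    rw [hv₂f]
    exact (((ht₁ x hx).hasDerivAt.mul (hw₂ x hx).hasDerivAt).add
      ((ht₂ x hx).hasDerivAt.mul (hw₂' x hx).hasDerivAt)).deriv
  have part1 : ∀ x ∈ Ioo p q,
      v₁ x * deriv v₂ x - deriv v₁ x * v₂ x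
        = h x * (w₁ x * deriv w₂ x - deriv w₁ x * w₂ x) := by
    intro x hx
    have h1 : deriv (deriv w₁) x = -(f x * deriv w₁ x + g x * w₁ x) := by
      linear_combination heq₁ x hx
    have h2 : deriv (deriv w₂) x = -(f x * deriv w₂ x + g x * w₂ x) := by
      linear_combination heq₂ x hx
    rw [hdv₁ x hx, hdv₂ x hx, hv₁, hv₂, hh, h1, h2]
    ring
  refine ⟨part1, ?_⟩
  by_cases hpq : p < q
  · set E : ℝ → ℂ := fun x => Complex.exp (F x) * (w₁ x * deriv w₂ x - deriv w₁ x * w₂ x)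
      with hE
    have hE' : ∀ x ∈ Ioo p q, HasDerivAt E 0 x := by
      intro x hx
      have hexp : HasDerivAt (fun x => Complex.exp (F x)) (Complex.exp (F x) * f x) x :=
        (Complex.hasDerivAt_exp (F x)).comp x (hF x hx)
      have hW : HasDerivAt (fun x => w₁ x * deriv w₂ x - deriv w₁ x * w₂ x)
          (deriv w₁ x * deriv w₂ x + w₁ x * deriv (deriv w₂) x
            - (deriv (deriv w₁) x * w₂ x + deriv w₁ x * deriv w₂ x)) x :=
        ((hw₁ x hx).hasDerivAt.mul (hw₂' x hx).hasDerivAt).sub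
          ((hw₁' x hx).hasDerivAt.mul (hw₂ x hx).hasDerivAt)
      have := hexp.mul hW
      convert this using 1
      · rfl
      · rfl
      have h1 := heq₁ x hx
      have h2 := heq₂ x hx
      linear_combination (-(Complex.exp (F x)) * w₁ x) * h2 + (Complex.exp (F x) * w₂ x) * h1
    set x₀ : ℝ := (p + q) / 2 with hx₀
    have hx₀mem : x₀ ∈ Ioo p q := ⟨by linarith, by linarith⟩
    refine ⟨E x₀, ?_, ?_⟩
    · intro x hx
      have hconv : Convex ℝ (Ioo p q) := convex_Ioo p q
      have hdiff : DifferentiableOn ℝ E (Ioo p q) := fun y hy =>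
        (hE' y hy).differentiableAt.differentiableWithinAt
      have hfd : ∀ y ∈ Ioo p q, fderivWithin ℝ E (Ioo p q) y = 0 := by
        intro y hy
        rw [fderivWithin_of_isOpen isOpen_Ioo hy]
        have := (hE' y hy).deriv
        ext z
        simp [fderiv_apply_one_eq_deriv, this]
      exact hconv.is_const_of_fderivWithin_eq_zero hdiff hfd hx hx₀mem
    · intro x hx
      rw [part1 x hx]
      have hcx : Complex.exp (F x) * (w₁ x * deriv w₂ x - deriv w₁ x * w₂ x) = E x₀ := by
        have hconv : Convex ℝ (Ioo p q) := convex_Ioo p q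
        have hdiff : DifferentiableOn ℝ E (Ioo p q) := fun y hy =>
          (hE' y hy).differentiableAt.differentiableWithinAt
        have hfd : ∀ y ∈ Ioo p q, fderivWithin ℝ E (Ioo p q) y = 0 := by
          intro y hy
          rw [fderivWithin_of_isOpen isOpen_Ioo hy]
          have := (hE' y hy).deriv
          ext z
          simp [fderiv_apply_one_eq_deriv, this]
        exact hconv.is_const_of_fderivWithin_eq_zero hdiff hfd hx hx₀mem
      rw [← hcx]
      ring
  · have hempty : Ioo p q = ∅ := Ioo_eq_empty hpq
    exact ⟨0, by simp [hempty], by simp [hempty]⟩
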